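/- (Output amplitudes of the Clifford-plus-T model circuit.) Let n, ξ ≥ 1, let g : 𝔽₂ⁿ → 𝔽₂ and junk : 𝔽₂ⁿ → 𝔽₂^{n+ξ−1} be functions, and let f : 𝔽₂ⁿ → 𝔽₂ be an n-variable degree-2 polynomial over 𝔽₂. Identify the index set 𝔽₂^{n+ξ} both with 𝔽₂ⁿ × 𝔽₂^ξ (first n bits, last ξ bits) and with 𝔽₂ × 𝔽₂^{n+ξ−1} (first bit, remaining bits). Let U be a unitary 2^{n+ξ} × 2^{n+ξ} complex matrix such that U·e_{(x, 0^ξ)} = e_{(g(x), junk(x))} for every x ∈ 𝔽₂ⁿ. Let Z₁ = Z ⊗ I_{2^{n+ξ−1}} with Z = diag(1, −1) acting on the first qubit. Then the vector w = (H_n ⊗ I_{2^ξ})·(D_f ⊗ I_{2^ξ})·U†·Z₁·U·(H_n ⊗ I_{2^ξ})·e_{0^{n+ξ}} satisfies w_{(z, 0^ξ)} = gap((f+g)_z)/2ⁿ for every z ∈ 𝔽₂ⁿ, and w_{(z, s)} = 0 whenever s ∈ 𝔽₂^ξ is nonzero; consequently, measuring the first n qubits yields outcome z with probability p_z(f+g)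 = gap((f+g)_z)²/2^{2n}. -/

import Mathlib

/-- `gap F = Σ_{x ∈ 𝔽₂ⁿ} (−1)^{F(x)}`. -/
def gap {n : ℕ} (F : (Fin n → ZMod 2) → ZMod 2) : ℤ :=
  ∑ x : Fin n → ZMod 2, if F x = 0 then 1 else -1

/-- The matrix `H_n` with entries `(H_n)_{x,y} = (−1)^{x·y} / 2^{n/2}`. -/
noncomputable def Hmat (n : ℕ) :
    Matrix (Fin n → ZMod 2) (Fin n → ZMod 2) ℂ :=
  Matrix.of fun x y =>
    (if (∑ i, x i * y i : ZMod 2) = 0 then 1 else -1) / (Real.sqrt 2 : ℂ) ^ n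

/-- The diagonal matrix `D_F` with entries `(D_F)_{x,x} = (−1)^{F(x)}`. -/
noncomputable def Dmat {n : ℕ} (F : (Fin n → ZMod 2) → ZMod 2) :
    Matrix (Fin n → ZMod 2) (Fin n → ZMod 2) ℂ :=
  Matrix.diagonal fun x => if F x = 0 then 1 else -1

open Matrix

/-- Concatenation `𝔽₂ⁿ × 𝔽₂^ξ → 𝔽₂^{n+ξ}` (first `n` bits, last `ξ` bits). -/
def appendBits {n ξ : ℕ} (x : Fin n → ZMod 2) (s : Fin ξ → ZMod 2) :
    Fin (n + ξ) → ZMod 2 :=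
  fun i => if h : i.val < n then x ⟨i.val, h⟩
    else s ⟨i.val - n, by have := i.isLt; omega⟩

/-- The identification `𝔽₂ × 𝔽₂^{N−1} → 𝔽₂^N` (first bit, remaining bits). -/
def consBit {N : ℕ} (a : ZMod 2) (r : Fin (N - 1) → ZMod 2) :
    Fin N → ZMod 2 :=
  fun i => if h : i.val = 0 then a
    else r ⟨i.val - 1, by have := i.isLt; omega⟩

/-- The first `n` bits of `v ∈ 𝔽₂^{n+ξ}`. -/
def firstBits {n ξ : ℕ} (v : Fin (n + ξ) → ZMod 2) : Fin n → ZMod 2 :=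
  fun i => v ⟨i.val, by have := i.isLt; omega⟩

/-- The last `ξ` bits of `v ∈ 𝔽₂^{n+ξ}`. -/
def lastBits {n ξ : ℕ} (v : Fin (n + ξ) → ZMod 2) : Fin ξ → ZMod 2 :=
  fun j => v ⟨n + j.val, by have := j.isLt; omega⟩

/-- `H_n ⊗ I_{2^ξ}`, under the identification `𝔽₂^{n+ξ} ≅ 𝔽₂ⁿ × 𝔽₂^ξ`. -/
noncomputable def HnI (n ξ : ℕ) :
    Matrix (Fin (n + ξ) → ZMod 2) (Fin (n + ξ) → ZMod 2) ℂ :=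
  Matrix.of fun v w =>
    Hmat n (firstBits v) (firstBits w) *
      (if lastBits v = lastBits w then 1 else 0)

/-- `D_f ⊗ I_{2^ξ}`, under the identification `𝔽₂^{n+ξ} ≅ 𝔽₂ⁿ × 𝔽₂^ξ`. -/
noncomputable def DfI (n ξ : ℕ) (f : (Fin n → ZMod 2) → ZMod 2) :
    Matrix (Fin (n + ξ) → ZMod 2) (Fin (n + ξ) → ZMod 2) ℂ :=
  Matrix.of fun v w =>
    Dmat f (firstBits v) (firstBits w) *
      (if lastBits v = lastBits w then 1 else 0)

/-- `Z₁ = Z ⊗ I_{2^{n+ξ−1}}`: the gate `Z = diag(1, −1)` on the first qubit. -/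
noncomputable def Zfirst (n ξ : ℕ) (h0 : 0 < n + ξ) :
    Matrix (Fin (n + ξ) → ZMod 2) (Fin (n + ξ) → ZMod 2) ℂ :=
  Matrix.diagonal fun v => if v ⟨0, h0⟩ = 0 then 1 else -1

/-- The output vector
`w = (H_n ⊗ I_{2^ξ})·(D_f ⊗ I_{2^ξ})·U†·Z₁·U·(H_n ⊗ I_{2^ξ})·e_{0^{n+ξ}}`
of the Clifford-plus-T model circuit. -/
noncomputable def outVecT (n ξ : ℕ) (h0 : 0 < n + ξ)
    (f : (Fin n → ZMod 2) → ZMod 2)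
    (U : Matrix (Fin (n + ξ) → ZMod 2) (Fin (n + ξ) → ZMod 2) ℂ) :
    (Fin (n + ξ) → ZMod 2) → ℂ :=
  (HnI n ξ * DfI n ξ f * Uᴴ * Zfirst n ξ h0 * U * HnI n ξ).mulVec
    (Pi.single (0 : Fin (n + ξ) → ZMod 2) 1)
section Aux

open Matrix

variable {n ξ : ℕ}

lemma firstBits_appendBits (x : Fin n → ZMod 2) (s : Fin ξ → ZMod 2) :
    firstBits (appendBits x s) = x := by
  funext i
  simp [firstBits, appendBits, i.isLt]

lemma lastBits_appendBits (x : Fin n → ZMod 2) (s : Fin ξ → ZMod 2) :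
    lastBits (appendBits x s) = s := by
  funext j
  simp only [lastBits, appendBits]
  rw [dif_neg (by omega)]
  congr 1
  exact Fin.ext (by simp)

lemma appendBits_firstBits_lastBits (v : Fin (n + ξ) → ZMod 2) :
    appendBits (firstBits v) (lastBits v) = v := by
  funext i
  simp only [appendBits, firstBits, lastBits]
  by_cases h : i.val < n
  · rw [dif_pos h]
  · rw [dif_neg h]
    congr 1
    exact Fin.ext (by simp; omega)

lemma eq_appendBits_iff (v : Fin (n + ξ) → ZMod 2) (x : Fin n → ZMod 2)
    (s : Fin ξ → ZMod 2) :
    v = appendBits x s ↔ firstBits v = x ∧ lastBits v = s := by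
  constructor
  · rintro rfl; exact ⟨firstBits_appendBits x s, lastBits_appendBits x s⟩
  · rintro ⟨rfl, rfl⟩; exact (appendBits_firstBits_lastBits v).symm

lemma consBit_apply_zero {N : ℕ} (h0 : 0 < N) (a : ZMod 2) (r : Fin (N-1) → ZMod 2) :
    consBit a r ⟨0, h0⟩ = a := by
  simp [consBit]

lemma single_const {ι : Type*} [DecidableEq ι] (j : ι) (d : ℂ) :
    (Pi.single j d : ι → ℂ) = d • (Pi.single j 1 : ι → ℂ) := by
  funext i
  simp [Pi.single_apply, mul_ite]

lemma sign_mul_sign (a b : ZMod 2) :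
    ((if a = 0 then (1:ℂ) else -1) * (if b = 0 then 1 else -1)) =
      if a + b = 0 then 1 else -1 := by
  rcases (show ∀ c : ZMod 2, c = 0 ∨ c = 1 by decide) a with rfl | rfl <;>
  rcases (show ∀ c : ZMod 2, c = 0 ∨ c = 1 by decide) b with rfl | rfl <;>
    simp_all [show ((1:ZMod 2) + 1 = 0) by decide, show ((1:ZMod 2) ≠ 0) by decide]

lemma sqrt_two_pow_mul (n : ℕ) :
    ((Real.sqrt 2 : ℂ)) ^ n * ((Real.sqrt 2 : ℂ)) ^ n = 2 ^ n := by
  rw [← mul_pow]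
  norm_num [← Complex.ofReal_mul, Real.mul_self_sqrt]

lemma HnI_single_zero :
    HnI n ξ *ᵥ Pi.single (0 : Fin (n+ξ) → ZMod 2) 1 =
      ((Real.sqrt 2 : ℂ) ^ n)⁻¹ •
        ∑ x : Fin n → ZMod 2,
          (Pi.single (appendBits x (0 : Fin ξ → ZMod 2)) 1 :
            (Fin (n + ξ) → ZMod 2) → ℂ) := by
  rw [Matrix.mulVec_single_one]
  funext v
  have hf0 : firstBits (0 : Fin (n+ξ) → ZMod 2) = 0 := rfl
  have hl0 : lastBits (0 : Fin (n+ξ) → ZMod 2) = 0 := rfl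
  simp only [HnI, Matrix.col_apply, Matrix.of_apply, hf0, hl0, Hmat, Pi.smul_apply, Finset.sum_apply,
    smul_eq_mul, mul_one]
  have : (∑ i, firstBits v i * (0 : Fin n → ZMod 2) i : ZMod 2) = 0 := by simp
  rw [if_pos this]
  rw [Finset.sum_congr rfl (fun x _ => Pi.single_apply _ _ _)]
  by_cases h : lastBits v = 0
  · rw [if_pos h, Finset.sum_eq_single (firstBits v)]
    · rw [if_pos]
      · field_simp
      · rw [eq_appendBits_iff]; exact ⟨rfl, h⟩
    · intro x _ hx
      rw [if_neg]
      rw [eq_appendBits_iff]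
      exact fun ⟨h1, _⟩ => hx h1.symm
    · simp
  · rw [if_neg h]
    have hz2 : ∀ x : Fin n → ZMod 2, x ∈ Finset.univ →
        (if v = appendBits x (0 : Fin ξ → ZMod 2) then (1:ℂ) else 0) = 0 := by
      intro x _
      rw [if_neg]
      rw [eq_appendBits_iff]
      exact fun ⟨_, h2⟩ => h h2
    rw [Finset.sum_eq_zero hz2, mul_zero]
    simp

lemma DfI_single (f : (Fin n → ZMod 2) → ZMod 2) (x : Fin n → ZMod 2) :
    DfI n ξ f *ᵥ Pi.single (appendBits x (0 : Fin ξ → ZMod 2)) 1 =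
      (if f x = 0 then (1:ℂ) else -1) •
        (Pi.single (appendBits x (0 : Fin ξ → ZMod 2)) 1 :
          (Fin (n + ξ) → ZMod 2) → ℂ) := by
  rw [Matrix.mulVec_single_one]
  funext v
  simp only [DfI, Matrix.col_apply, Matrix.of_apply, Dmat, Matrix.diagonal_apply, mul_one,
    Pi.smul_apply, smul_eq_mul]
  rw [firstBits_appendBits, lastBits_appendBits, Pi.single_apply]
  by_cases h : v = appendBits x (0 : Fin ξ → ZMod 2)
  · subst h
    rw [firstBits_appendBits, lastBits_appendBits]
    simp
  · rw [if_neg h, mul_zero]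
    rcases (not_and_or.mp (fun hh => h ((eq_appendBits_iff v x 0).mpr hh))) with h1 | h1
    · rw [if_neg h1, zero_mul]
    · rw [if_neg h1, mul_zero]

lemma Zfirst_single (h0 : 0 < n + ξ) (a : ZMod 2) (r : Fin (n + ξ - 1) → ZMod 2) :
    Zfirst n ξ h0 *ᵥ Pi.single (consBit a r) 1 =
      (if a = 0 then (1:ℂ) else -1) •
        (Pi.single (consBit a r) 1 : (Fin (n + ξ) → ZMod 2) → ℂ) := by
  rw [Matrix.mulVec_single_one]
  funext v
  simp only [Zfirst, Matrix.col_apply, Matrix.diagonal_apply, mul_one, Pi.smul_apply, smul_eq_mul,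
    Pi.single_apply]
  by_cases h : v = consBit a r
  · subst h
    rw [if_pos rfl, consBit_apply_zero h0]
    simp
  · rw [if_neg h, if_neg h, mul_zero]

end Aux
lemma mulVec_finsum {m : Type*} [Fintype m] (M : Matrix m m ℂ) {ι : Type*}
    (t : Finset ι) (v : ι → m → ℂ) :
    M *ᵥ (∑ i ∈ t, v i) = ∑ i ∈ t, M *ᵥ v i := by
  funext i
  simp only [Matrix.mulVec, dotProduct, Finset.sum_apply, Finset.mul_sum]
  rw [Finset.sum_comm]

lemma outVecT_apply (n ξ : ℕ) (h0 : 0 < n + ξ)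
    (g : (Fin n → ZMod 2) → ZMod 2)
    (junk : (Fin n → ZMod 2) → (Fin (n + ξ - 1) → ZMod 2))
    (f : (Fin n → ZMod 2) → ZMod 2)
    (U : Matrix (Fin (n + ξ) → ZMod 2) (Fin (n + ξ) → ZMod 2) ℂ)
    (hU₁ : Uᴴ * U = 1)
    (hUact : ∀ x : Fin n → ZMod 2,
      U.mulVec (Pi.single (appendBits x (0 : Fin ξ → ZMod 2)) 1) =
        (Pi.single (consBit (g x) (junk x)) 1 : (Fin (n + ξ) → ZMod 2) → ℂ))
    (z : Fin n → ZMod 2) (s : Fin ξ → ZMod 2) :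
    outVecT n ξ h0 f U (appendBits z s) =
      if s = 0 then
        (∑ x : Fin n → ZMod 2,
          if (f x + g x) + ∑ i, z i * x i = 0 then (1:ℂ) else -1) / 2 ^ n
      else 0 := by
  classical
  set c : ℂ := (Real.sqrt 2 : ℂ) ^ n with hc
  have hcc : c * c = 2 ^ n := sqrt_two_pow_mul n
  have hc0 : c ≠ 0 := by
    rw [hc]
    exact pow_ne_zero _ (Complex.ofReal_ne_zero.mpr (by positivity))
  have hw : outVecT n ξ h0 f U =
      HnI n ξ *ᵥ (DfI n ξ f *ᵥ (Uᴴ *ᵥ (Zfirst n ξ h0 *ᵥ (U *ᵥ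
        (HnI n ξ *ᵥ Pi.single (0 : Fin (n + ξ) → ZMod 2) 1))))) := by
    unfold outVecT
    simp only [Matrix.mulVec_mulVec, Matrix.mul_assoc]
  have hx : ∀ x : Fin n → ZMod 2,
      HnI n ξ *ᵥ (DfI n ξ f *ᵥ (Uᴴ *ᵥ (Zfirst n ξ h0 *ᵥ (U *ᵥ
        Pi.single (appendBits x (0 : Fin ξ → ZMod 2)) 1)))) =
      ((if g x = 0 then (1:ℂ) else -1) * (if f x = 0 then (1:ℂ) else -1)) •
        (HnI n ξ *ᵥ Pi.single (appendBits x (0 : Fin ξ → ZMod 2)) 1) := by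
    intro x
    have h2 : Uᴴ *ᵥ Pi.single (consBit (g x) (junk x)) (1:ℂ) =
        Pi.single (appendBits x (0 : Fin ξ → ZMod 2)) 1 := by
      rw [← hUact x, Matrix.mulVec_mulVec, hU₁, Matrix.one_mulVec]
    rw [hUact x, Zfirst_single h0, Matrix.mulVec_smul, h2,
      Matrix.mulVec_smul, DfI_single, Matrix.mulVec_smul, Matrix.mulVec_smul,
      smul_smul]
  rw [hw, HnI_single_zero, Matrix.mulVec_smul, mulVec_finsum, Matrix.mulVec_smul,
    mulVec_finsum, Matrix.mulVec_smul, mulVec_finsum, Matrix.mulVec_smul,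
    mulVec_finsum, Matrix.mulVec_smul, mulVec_finsum]
  rw [Finset.sum_congr rfl (fun x _ => hx x)]
  have hval : ∀ x : Fin n → ZMod 2,
      (HnI n ξ *ᵥ Pi.single (appendBits x (0 : Fin ξ → ZMod 2)) 1)
        (appendBits z s) =
      ((if (∑ i, z i * x i : ZMod 2) = 0 then (1:ℂ) else -1) / c) *
        (if s = 0 then 1 else 0) := by
    intro x
    rw [Matrix.mulVec_single_one]
    simp only [HnI, Matrix.col_apply, Matrix.of_apply, Hmat, mul_one,
      firstBits_appendBits, lastBits_appendBits]
    rfl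
  simp only [Pi.smul_apply, Finset.sum_apply, smul_eq_mul]
  rw [Finset.sum_congr rfl (fun x _ => by rw [hval x])]
  have hterm : ∀ x : Fin n → ZMod 2,
      (if g x = 0 then (1:ℂ) else -1) * (if f x = 0 then (1:ℂ) else -1) *
        ((if (∑ i, z i * x i : ZMod 2) = 0 then (1:ℂ) else -1) / c *
          (if s = 0 then (1:ℂ) else 0)) =
      (if s = 0 then (1:ℂ) else 0) *
        ((if (f x + g x) + ∑ i, z i * x i = 0 then (1:ℂ) else -1) / c) := by
    intro x
    rw [← sign_mul_sign (f x + g x), ← sign_mul_sign (f x) (g x)]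
    ring
  rw [Finset.sum_congr rfl (fun x _ => hterm x), ← Finset.mul_sum,
    ← Finset.sum_div]
  by_cases hs : s = 0
  · rw [if_pos hs, if_pos hs, one_mul, ← hcc]
    rw [inv_mul_eq_div, div_div, mul_comm]
  · rw [if_neg hs, if_neg hs]
    simp
/-- Output amplitudes of the Clifford-plus-T model circuit: if the unitary `U`
computes the Boolean function `g` with garbage `junk`, i.e.
`U e_{(x,0^ξ)} = e_{(g(x), junk(x))}`, and `f` is a degree-2 polynomial over
`𝔽₂`, then the vector
`w = (H_n ⊗ I_{2^ξ})·(D_f ⊗ I_{2^ξ})·U†·Z₁·U·(H_n ⊗ I_{2^ξ})·e_{0^{n+ξ}}`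
satisfies `w_{(z,0^ξ)} = gap((f+g)_z)/2ⁿ` and `w_{(z,s)} = 0` for `s ≠ 0`;
consequently measuring the first `n` qubits yields `z` with probability
`gap((f+g)_z)²/2^{2n}`. -/
theorem clifford_T_amplitude (n ξ : ℕ) (hn : 1 ≤ n) (hξ : 1 ≤ ξ)
    (g : (Fin n → ZMod 2) → ZMod 2)
    (junk : (Fin n → ZMod 2) → (Fin (n + ξ - 1) → ZMod 2))
    (α : Fin n → ZMod 2) (β : Fin n → Fin n → ZMod 2)
    (f : (Fin n → ZMod 2) → ZMod 2)
    (hf : ∀ x, f x = (∑ i, α i * x i) +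
      ∑ p ∈ Finset.univ.filter (fun p : Fin n × Fin n => p.2 < p.1),
        β p.1 p.2 * (x p.1 * x p.2))
    (U : Matrix (Fin (n + ξ) → ZMod 2) (Fin (n + ξ) → ZMod 2) ℂ)
    (hU₁ : Uᴴ * U = 1) (hU₂ : U * Uᴴ = 1)
    (hUact : ∀ x : Fin n → ZMod 2,
      U.mulVec (Pi.single (appendBits x (0 : Fin ξ → ZMod 2)) 1) =
        (Pi.single (consBit (g x) (junk x)) 1 : (Fin (n + ξ) → ZMod 2) → ℂ)) :
    ∀ z : Fin n → ZMod 2,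
      outVecT n ξ (by omega) f U (appendBits z (0 : Fin ξ → ZMod 2)) =
        ((gap (fun x => (f x + g x) + ∑ i, z i * x i) : ℤ) : ℂ) / 2 ^ n ∧
      (∀ s : Fin ξ → ZMod 2, s ≠ 0 →
        outVecT n ξ (by omega) f U (appendBits z s) = 0) ∧
      (∑ s : Fin ξ → ZMod 2,
          ‖outVecT n ξ (by omega) f U (appendBits z s)‖ ^ 2) =
        ((gap (fun x => (f x + g x) + ∑ i, z i * x i) : ℝ)) ^ 2
          / 2 ^ (2 * n) := by
  intro z
  have hmain : outVecT n ξ (by omega) f U (appendBits z (0 : Fin ξ → ZMod 2)) =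
      ((gap (fun x => (f x + g x) + ∑ i, z i * x i) : ℤ) : ℂ) / 2 ^ n := by
    rw [outVecT_apply n ξ (by omega) g junk f U hU₁ hUact z 0, if_pos rfl, gap]
    push_cast
    rfl
  have hzero : ∀ s : Fin ξ → ZMod 2, s ≠ 0 →
      outVecT n ξ (by omega) f U (appendBits z s) = 0 := by
    intro s hs
    rw [outVecT_apply n ξ (by omega) g junk f U hU₁ hUact z s, if_neg hs]
  refine ⟨hmain, hzero, ?_⟩
  rw [Finset.sum_eq_single (0 : Fin ξ → ZMod 2)]
  · rw [hmain]
    rw [norm_div, Complex.norm_intCast, norm_pow, Complex.norm_two]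
    rw [div_pow, sq_abs, ← pow_mul, mul_comm n 2]
  · intro s _ hs
    rw [hzero s hs]
    simp
  · intro h
    exact absurd (Finset.mem_univ _) h
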